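/- The standard flat torus ℝ²/ℤ² has blocking number 4: for any two points x,y of ℝ²/ℤ², the set of all geodesic segments connecting x and y can be blocked by 4 points, and 4 points are in general necessary, so B(ℝ²/ℤ²)=4. -/

import Mathlib

open Set

noncomputable section

/-- The integer lattice `ℤ² ⊆ ℝ²` (with `ℝ²` carrying the Euclidean metric). -/
def intLattice : AddSubgroup (EuclideanSpace ℝ (Fin 2)) where
  carrier := {v | ∀ i, ∃ n : ℤ, v i = n}
  zero_mem' := fun i => ⟨0, by simp⟩
  add_mem' := by
    intro a b ha hb i
    obtain ⟨n, hn⟩ := ha i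
    obtain ⟨m, hm⟩ := hb i
    exact ⟨n + m, by simp [PiLp.add_apply, hn, hm]⟩
  neg_mem' := by
    intro a ha i
    obtain ⟨n, hn⟩ := ha i
    exact ⟨-n, by simp [PiLp.neg_apply, hn]⟩

/-- The standard flat torus `ℝ²/ℤ²`. -/
def FlatTorus : Type := EuclideanSpace ℝ (Fin 2) ⧸ intLattice

/-- The quotient projection `π : ℝ² → ℝ²/ℤ²`. -/
def torusProj : EuclideanSpace ℝ (Fin 2) → FlatTorus := QuotientAddGroup.mk

/-- A geodesic segment of the standard flat torus: the projection of an
affine segment `t ↦ x + t • v` (with `v` a unit vector) of `ℝ²`, traversed at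
unit speed for time `a > 0`. -/
def IsTorusGeodesicSegment (γ : ℝ → FlatTorus) (a : ℝ) : Prop :=
  0 < a ∧ ∃ (x v : EuclideanSpace ℝ (Fin 2)), ‖v‖ = 1 ∧
    ∀ t : ℝ, γ t = torusProj (x + t • v)

/-- `S` blocks the pair `(x,y)` on the flat torus: every geodesic segment
connecting `x` and `y` has an interior point lying in `S`. -/
def TorusBlocks (S : Set FlatTorus) (x y : FlatTorus) : Prop :=
  ∀ (γ : ℝ → FlatTorus) (a : ℝ), IsTorusGeodesicSegment γ a →
    γ 0 = x → γ a = y → ∃ t ∈ Set.Ioo 0 a, γ t ∈ S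

/-- The blocking number between two points of the flat torus. -/
def torusBlockingNumber (x y : FlatTorus) : ℕ∞ :=
  sInf {n : ℕ∞ | ∃ S : Set FlatTorus, TorusBlocks S x y ∧ S.encard = n}

namespace FlatTorusAux

/-- Convenient constructor for vectors in `ℝ²`. -/
def v2 (a b : ℝ) : EuclideanSpace ℝ (Fin 2) := WithLp.toLp 2 (fun i : Fin 2 => if i = 0 then a else b)

lemma v2_zero (a b : ℝ) : v2 a b 0 = a := rfl
lemma v2_one (a b : ℝ) : v2 a b 1 = b := rfl

lemma apply_add (z w : EuclideanSpace ℝ (Fin 2)) (i : Fin 2) : (z + w) i = z i + w i := rfl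
lemma apply_smul (r : ℝ) (z : EuclideanSpace ℝ (Fin 2)) (i : Fin 2) : (r • z) i = r * z i := rfl
lemma apply_neg (z : EuclideanSpace ℝ (Fin 2)) (i : Fin 2) : (-z) i = - z i := rfl

lemma proj_eq_iff (u w : EuclideanSpace ℝ (Fin 2)) :
    torusProj u = torusProj w ↔ -u + w ∈ intLattice := QuotientAddGroup.eq

/-- Upper bound: the four "midpoints" block any pair. -/
lemma blocks_upper (x y : FlatTorus) :
    ∃ S : Set FlatTorus, TorusBlocks S x y ∧ S.encard ≤ 4 := by
  obtain ⟨a, rfl⟩ := QuotientAddGroup.mk_surjective x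
  obtain ⟨b, rfl⟩ := QuotientAddGroup.mk_surjective y
  set m : EuclideanSpace ℝ (Fin 2) := (2⁻¹ : ℝ) • (a + b) with hm
  refine ⟨{torusProj (m + v2 0 0), torusProj (m + v2 (1/2) 0),
           torusProj (m + v2 0 (1/2)), torusProj (m + v2 (1/2) (1/2))}, ?_, ?_⟩
  · intro γ len hgeo h0 hlen
    obtain ⟨hpos, x0, v, hv, hγ⟩ := hgeo
    refine ⟨len / 2, ⟨by linarith, by linarith⟩, ?_⟩
    have hk1 : -x0 + a ∈ intLattice := by
      have h1 : torusProj x0 = torusProj a := by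
        have := (hγ 0).symm.trans h0
        simp at this; exact this
      exact (proj_eq_iff _ _).mp h1
    have hk2 : -(x0 + len • v) + b ∈ intLattice := by
      have h1 : torusProj (x0 + len • v) = torusProj b := (hγ len).symm.trans hlen
      exact (proj_eq_iff _ _).mp h1
    set k : EuclideanSpace ℝ (Fin 2) := (-x0 + a) + (-(x0 + len • v) + b) with hkdef
    have hk : k ∈ intLattice := intLattice.add_mem hk1 hk2
    obtain ⟨n0, hn0⟩ := hk 0
    obtain ⟨n1, hn1⟩ := hk 1
    have key : ∀ e0 e1 : ℝ, ((2⁻¹ : ℝ) • k + v2 e0 e1) ∈ intLattice →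
        torusProj (x0 + (len / 2) • v) = torusProj (m + v2 e0 e1) := by
      intro e0 e1 hmem
      refine (proj_eq_iff _ _).mpr ?_
      have hvec : -(x0 + (len / 2) • v) + (m + v2 e0 e1) = (2⁻¹ : ℝ) • k + v2 e0 e1 := by
        rw [hm, hkdef]; module
      rw [hvec]; exact hmem
    rw [hγ (len / 2)]
    have hc0 : ∀ e0 e1 : ℝ, ((2⁻¹ : ℝ) • k + v2 e0 e1) 0 = 2⁻¹ * (n0 : ℝ) + e0 := by
      intro e0 e1
      rw [apply_add, apply_smul, hn0, v2_zero]
    have hc1 : ∀ e0 e1 : ℝ, ((2⁻¹ : ℝ) • k + v2 e0 e1) 1 = 2⁻¹ * (n1 : ℝ) + e1 := by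
      intro e0 e1
      rw [apply_add, apply_smul, hn1, v2_one]
    have pick : ∀ e0 e1 : ℝ, (∃ j0 : ℤ, 2⁻¹ * (n0 : ℝ) + e0 = j0) →
        (∃ j1 : ℤ, 2⁻¹ * (n1 : ℝ) + e1 = j1) → ((2⁻¹ : ℝ) • k + v2 e0 e1) ∈ intLattice := by
      intro e0 e1 ⟨j0, hj0⟩ ⟨j1, hj1⟩ i
      fin_cases i
      · exact ⟨j0, (hc0 e0 e1).trans hj0⟩
      · exact ⟨j1, (hc1 e0 e1).trans hj1⟩
    rcases Int.even_or_odd n0 with ⟨m0, hm0⟩ | ⟨m0, hm0⟩ <;>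
      rcases Int.even_or_odd n1 with ⟨m1, hm1⟩ | ⟨m1, hm1⟩
    · rw [key 0 0 (pick 0 0 ⟨m0, by rw [hm0]; push_cast; ring⟩ ⟨m1, by rw [hm1]; push_cast; ring⟩)]
      exact Set.mem_insert _ _
    · rw [key 0 (1/2) (pick 0 (1/2) ⟨m0, by rw [hm0]; push_cast; ring⟩
        ⟨m1 + 1, by rw [hm1]; push_cast; ring⟩)]
      exact Set.mem_insert_of_mem _ (Set.mem_insert_of_mem _ (Set.mem_insert _ _))
    · rw [key (1/2) 0 (pick (1/2) 0 ⟨m0 + 1, by rw [hm0]; push_cast; ring⟩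
        ⟨m1, by rw [hm1]; push_cast; ring⟩)]
      exact Set.mem_insert_of_mem _ (Set.mem_insert _ _)
    · rw [key (1/2) (1/2) (pick (1/2) (1/2) ⟨m0 + 1, by rw [hm0]; push_cast; ring⟩
        ⟨m1 + 1, by rw [hm1]; push_cast; ring⟩)]
      exact Set.mem_insert_of_mem _ (Set.mem_insert_of_mem _ (Set.mem_insert_of_mem _ rfl))
  · refine le_trans (Set.encard_insert_le _ _) (le_trans (add_le_add_left
      (le_trans (Set.encard_insert_le _ _) (add_le_add_left
        (le_trans (Set.encard_insert_le _ _) (add_le_add_left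
          (le_of_eq (Set.encard_singleton _)) 1)) 1)) 1) ?_)
    norm_num

lemma no_int {s s' : ℝ} (hs0 : 0 < s) (hs1 : s < 1) (hs'0 : 0 < s') (hs'1 : s' < 1)
    (n : ℤ) (h : -(s * (1/3)) + s' * (-(2/3)) = (n : ℝ)) : False := by
  have h1 : (-1 : ℝ) < (n : ℝ) := by linarith
  have h2 : (n : ℝ) < 0 := by linarith
  have h3 : (-1 : ℤ) < n := by exact_mod_cast h1
  have h4 : n < 0 := by exact_mod_cast h2
  omega

lemma no_int' {s s' : ℝ} (hs0 : 0 < s) (hs1 : s < 1) (hs'0 : 0 < s') (hs'1 : s' < 1)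
    (n : ℤ) (h : -(s * (-(2/3))) + s' * (1/3) = (n : ℝ)) : False := by
  have h1 : (0 : ℝ) < (n : ℝ) := by linarith
  have h2 : (n : ℝ) < 1 := by linarith
  have h3 : (0 : ℤ) < n := by exact_mod_cast h1
  have h4 : n < 1 := by exact_mod_cast h2
  omega

/-- Lower bound: any set blocking `π(0)` and `π(1/3,1/3)` has at least 4 points. -/
lemma blocks_lower (S : Set FlatTorus)
    (hS : TorusBlocks S (torusProj 0) (torusProj (v2 (1/3) (1/3)))) : 4 ≤ S.encard := by
  classical
  set w1 : EuclideanSpace ℝ (Fin 2) := v2 (1/3) (1/3) with hw1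
  set w2 : EuclideanSpace ℝ (Fin 2) := v2 (-(2/3)) (1/3) with hw2
  set w3 : EuclideanSpace ℝ (Fin 2) := v2 (1/3) (-(2/3)) with hw3
  set w4 : EuclideanSpace ℝ (Fin 2) := v2 (-(2/3)) (-(2/3)) with hw4
  have hne : ∀ w : EuclideanSpace ℝ (Fin 2), w 0 ≠ 0 → w ≠ 0 := by
    intro w h h0
    exact h (by rw [h0]; rfl)
  have hw1ne : w1 ≠ 0 := hne _ (by rw [hw1, v2_zero]; norm_num)
  have hw2ne : w2 ≠ 0 := hne _ (by rw [hw2, v2_zero]; norm_num)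
  have hw3ne : w3 ≠ 0 := hne _ (by rw [hw3, v2_zero]; norm_num)
  have hw4ne : w4 ≠ 0 := hne _ (by rw [hw4, v2_zero]; norm_num)
  -- get a blocking point on each of the four segments
  have main : ∀ w : EuclideanSpace ℝ (Fin 2), w ≠ 0 → torusProj w = torusProj w1 →
      ∃ s : ℝ, 0 < s ∧ s < 1 ∧ torusProj (s • w) ∈ S := by
    intro w hw hww
    have hnorm : (0 : ℝ) < ‖w‖ := norm_pos_iff.mpr hw
    have hgeo : IsTorusGeodesicSegment (fun t => torusProj ((0 : EuclideanSpace ℝ (Fin 2)) +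
        t • (‖w‖⁻¹ • w))) ‖w‖ :=
      ⟨hnorm, 0, ‖w‖⁻¹ • w, norm_smul_inv_norm hw, fun t => rfl⟩
    have h0 : torusProj ((0 : EuclideanSpace ℝ (Fin 2)) + (0:ℝ) • (‖w‖⁻¹ • w)) = torusProj 0 := by
      norm_num
    have hend : torusProj ((0 : EuclideanSpace ℝ (Fin 2)) + ‖w‖ • (‖w‖⁻¹ • w))
        = torusProj w1 := by
      rw [zero_add, smul_smul, mul_inv_cancel₀ (ne_of_gt hnorm), one_smul]
      exact hww
    obtain ⟨t, ht, htS⟩ := hS _ ‖w‖ hgeo h0 hend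
    refine ⟨t / ‖w‖, div_pos ht.1 hnorm, (div_lt_one hnorm).mpr ht.2, ?_⟩
    have : (0 : EuclideanSpace ℝ (Fin 2)) + t • (‖w‖⁻¹ • w) = (t / ‖w‖) • w := by
      rw [zero_add, smul_smul, div_eq_mul_inv]
    rwa [this] at htS
  have hl1 : torusProj w1 = torusProj w1 := rfl
  have hl2 : torusProj w2 = torusProj w1 := by
    refine (proj_eq_iff _ _).mpr ?_
    intro i; fin_cases i
    · exact ⟨1, by show -(w2 0) + w1 0 = ((1:ℤ):ℝ); rw [hw2, hw1, v2_zero, v2_zero]; norm_num⟩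
    · exact ⟨0, by show -(w2 1) + w1 1 = ((0:ℤ):ℝ); rw [hw2, hw1, v2_one, v2_one]; norm_num⟩
  have hl3 : torusProj w3 = torusProj w1 := by
    refine (proj_eq_iff _ _).mpr ?_
    intro i; fin_cases i
    · exact ⟨0, by show -(w3 0) + w1 0 = ((0:ℤ):ℝ); rw [hw3, hw1, v2_zero, v2_zero]; norm_num⟩
    · exact ⟨1, by show -(w3 1) + w1 1 = ((1:ℤ):ℝ); rw [hw3, hw1, v2_one, v2_one]; norm_num⟩
  have hl4 : torusProj w4 = torusProj w1 := by
    refine (proj_eq_iff _ _).mpr ?_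
    intro i; fin_cases i
    · exact ⟨1, by show -(w4 0) + w1 0 = ((1:ℤ):ℝ); rw [hw4, hw1, v2_zero, v2_zero]; norm_num⟩
    · exact ⟨1, by show -(w4 1) + w1 1 = ((1:ℤ):ℝ); rw [hw4, hw1, v2_one, v2_one]; norm_num⟩
  obtain ⟨s1, hs10, hs11, hp1⟩ := main w1 hw1ne hl1
  obtain ⟨s2, hs20, hs21, hp2⟩ := main w2 hw2ne hl2
  obtain ⟨s3, hs30, hs31, hp3⟩ := main w3 hw3ne hl3
  obtain ⟨s4, hs40, hs41, hp4⟩ := main w4 hw4ne hl4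
  -- distinctness of the four blocking points
  have comp : ∀ (s s' : ℝ) (u u' : EuclideanSpace ℝ (Fin 2)) (i : Fin 2),
      torusProj (s • u) = torusProj (s' • u') →
      ∃ n : ℤ, -(s * u i) + s' * u' i = (n : ℝ) := by
    intro s s' u u' i h
    obtain ⟨n, hn⟩ := (proj_eq_iff _ _).mp h i
    exact ⟨n, by rw [← hn, apply_add, apply_neg, apply_smul, apply_smul]⟩
  have hne12 : torusProj (s1 • w1) ≠ torusProj (s2 • w2) := by
    intro h
    obtain ⟨n, hn⟩ := comp _ _ _ _ 0 h
    rw [hw1, hw2, v2_zero, v2_zero] at hn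
    exact no_int hs10 hs11 hs20 hs21 n hn
  have hne13 : torusProj (s1 • w1) ≠ torusProj (s3 • w3) := by
    intro h
    obtain ⟨n, hn⟩ := comp _ _ _ _ 1 h
    rw [hw1, hw3, v2_one, v2_one] at hn
    exact no_int hs10 hs11 hs30 hs31 n hn
  have hne14 : torusProj (s1 • w1) ≠ torusProj (s4 • w4) := by
    intro h
    obtain ⟨n, hn⟩ := comp _ _ _ _ 0 h
    rw [hw1, hw4, v2_zero, v2_zero] at hn
    exact no_int hs10 hs11 hs40 hs41 n hn
  have hne23 : torusProj (s2 • w2) ≠ torusProj (s3 • w3) := by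
    intro h
    obtain ⟨n, hn⟩ := comp _ _ _ _ 0 h
    rw [hw2, hw3, v2_zero, v2_zero] at hn
    exact no_int' hs20 hs21 hs30 hs31 n hn
  have hne24 : torusProj (s2 • w2) ≠ torusProj (s4 • w4) := by
    intro h
    obtain ⟨n, hn⟩ := comp _ _ _ _ 1 h
    rw [hw2, hw4, v2_one, v2_one] at hn
    exact no_int hs20 hs21 hs40 hs41 n hn
  have hne34 : torusProj (s3 • w3) ≠ torusProj (s4 • w4) := by
    intro h
    obtain ⟨n, hn⟩ := comp _ _ _ _ 0 h
    rw [hw3, hw4, v2_zero, v2_zero] at hn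
    exact no_int hs30 hs31 hs40 hs41 n hn
  have hsub : ({torusProj (s1 • w1), torusProj (s2 • w2), torusProj (s3 • w3),
      torusProj (s4 • w4)} : Set FlatTorus) ⊆ S := by
    intro z hz
    rcases hz with rfl | rfl | rfl | rfl
    exacts [hp1, hp2, hp3, hp4]
  have hcard : ({torusProj (s1 • w1), torusProj (s2 • w2), torusProj (s3 • w3),
      torusProj (s4 • w4)} : Set FlatTorus).encard = 4 := by
    rw [Set.encard_insert_of_notMem, Set.encard_insert_of_notMem, Set.encard_pair hne34]
    · rfl
    · simp only [Set.mem_insert_iff, Set.mem_singleton_iff]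
      push_neg
      exact ⟨hne23, hne24⟩
    · simp only [Set.mem_insert_iff, Set.mem_singleton_iff]
      push_neg
      exact ⟨hne12, hne13, hne14⟩
  calc (4 : ℕ∞) = _ := hcard.symm
    _ ≤ S.encard := Set.encard_mono hsub

end FlatTorusAux


/-- **Example 2.** The standard flat torus `ℝ²/ℤ²` has blocking number `4`:
for any two points `x, y ∈ ℝ²/ℤ²` the set of all geodesic segments connecting
`x` and `y` can be blocked by `4` points, and `4` points are in general
necessary, so `B(ℝ²/ℤ²) = sup_{x,y} B(x,y) = 4`. -/
theorem flatTorus_blockingNumber_eq_four :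
    (∀ x y : FlatTorus, ∃ S : Set FlatTorus, TorusBlocks S x y ∧ S.encard ≤ 4) ∧
    (⨆ (x : FlatTorus) (y : FlatTorus), torusBlockingNumber x y) = 4 := by
  constructor
  · exact FlatTorusAux.blocks_upper
  · apply le_antisymm
    · refine iSup_le fun x => iSup_le fun y => ?_
      obtain ⟨S, hS, hc⟩ := FlatTorusAux.blocks_upper x y
      exact le_trans (sInf_le ⟨S, hS, rfl⟩) hc
    · have h4 : (4 : ℕ∞) ≤ torusBlockingNumber (torusProj 0)
          (torusProj (FlatTorusAux.v2 (1/3) (1/3))) := by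
        refine le_sInf fun n hn => ?_
        obtain ⟨S, hS, rfl⟩ := hn
        exact FlatTorusAux.blocks_lower S hS
      refine le_trans h4 (le_trans ?_ (le_iSup (fun x => ⨆ y, torusBlockingNumber x y)
        (torusProj 0)))
      exact le_iSup (fun y => torusBlockingNumber (torusProj 0) y)
        (torusProj (FlatTorusAux.v2 (1/3) (1/3)))

end
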